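/- Let R be a simple Euclidean Ore domain of the form A[∂;σ,δ] with A a division ring, and M = Diag(m_1,...,m_r) with all m_i ≠ 0. Then the left R-module R^r/R^r·M has dimension d = Σ deg(m_i) as a left A-vector space. If p ∈ R^{r×1} is a column vector and c ∈ R generates the left annihilator ideal {f ∈ R : f·p ∈ R^r·M}, and deg(c) = d, then R^r/R^r·M ≅ R/Rc; i.e., Diag(1,...,1,c) is a Jacobson form of M. -/
import Mathlib

section Aux

universe u v

theorem cardinal_sum_natCast_aux {ι : Type v} [Fintype ι] (d : ι → ℕ) :
    (Cardinal.sum fun i => ((d i : Cardinal.{max u v}))) = ((∑ i, d i : ℕ) : Cardinal.{max u v}) := by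
  have h : ∀ i, ((d i : Cardinal.{max u v})) = Cardinal.mk (ULift.{max u v} (Fin (d i))) :=
    fun i => by simp
  simp_rw [h, ← Cardinal.mk_sigma]
  simp [Cardinal.mk_fintype]

/-- Transfer the `compHom` rank along an `R`-linear equivalence, where the codomain has
an `A`-module structure compatible with `φ`. -/
theorem compHom_rank_eq_aux {A R : Type*} {M M' : Type u} [DivisionRing A] [Ring R]
    [AddCommGroup M] [Module R M] [AddCommGroup M'] [Module R M']
    (φ : A →+* R) [iA : Module A M'] (hsmul : ∀ (a : A) (x : M'), a • x = φ a • x)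
    (e : M ≃ₗ[R] M') :
    @Module.rank A M _ _ (Module.compHom _ φ) = Module.rank A M' := by
  letI := Module.compHom M φ
  exact LinearEquiv.rank_eq
    { toFun := e, invFun := e.symm,
      left_inv := e.left_inv, right_inv := e.right_inv,
      map_add' := e.map_add,
      map_smul' := fun a x => by
        show e (φ a • x) = a • e x
        rw [hsmul, map_smul] }

end Aux

/-- Let `R = A[∂;σ,δ]` be a simple Euclidean Ore domain over a division ring `A`
(the `A`-vector space structure on left `R`-modules comes from the embedding `φ : A →+* R`;
`deg` is the `∂`-degree, and for nonzero `x ∈ R` the left module `R/Rx` has `A`-dimension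
`deg x` -- hypothesis `hdim`).  Let `M = Diag(m₁,…,m_r)` with all `mᵢ ≠ 0` and
`Q = R^r / R^r·M` the quotient by the span `N` of the rows.  Then `dim_A Q = d = Σ deg mᵢ`.
Moreover, if `p ∈ R^{r×1}` and `c ∈ R` generates the left annihilator `{f : f·p̄ = 0}` of the
class of `p` in `Q`, and `deg c = d`, then `Q ≅ R/Rc`; i.e. `Diag(1,…,1,c)` is a Jacobson form
of `M`. -/
theorem cyclic_vector_jacobson_form
    {A R : Type*} [DivisionRing A] [Ring R] [IsDomain R] (φ : A →+* R) {r : ℕ}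
    (deg : R → ℕ)
    (hdim : ∀ x : R, x ≠ 0 →
      @Module.rank A (R ⧸ Ideal.span {x}) _ _ (Module.compHom _ φ) = deg x)
    (m : Fin r → R) (hm : ∀ i, m i ≠ 0)
    (N : Submodule R (Fin r → R))
    (hN : N = Submodule.span R (Set.range fun i => Matrix.diagonal m i))
    (p : Fin r → R) (c : R) (hc : c ≠ 0)
    (hann : {f : R | f • (Submodule.Quotient.mk p : (Fin r → R) ⧸ N) = 0}
        = ((Ideal.span {c} : Ideal R) : Set R))
    (hdegc : deg c = ∑ i, deg (m i)) :
    @Module.rank A ((Fin r → R) ⧸ N) _ _ (Module.compHom _ φ) = ∑ i, deg (m i) ∧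
    Nonempty (((Fin r → R) ⧸ N) ≃ₗ[R] (R ⧸ Ideal.span {c})) := by
  classical
  set P : Fin r → Submodule R R := fun i => Ideal.span {m i} with hP
  -- Step 1 : N is the "product" submodule Π Rmᵢ.
  have hNpi : N = Submodule.pi Set.univ P := by
    rw [hN]
    apply le_antisymm
    · rw [Submodule.span_le]
      rintro _ ⟨i, rfl⟩
      rw [SetLike.mem_coe, Submodule.mem_pi]
      intro j _
      show Matrix.diagonal m i j ∈ P j
      rw [Matrix.diagonal_apply]
      split_ifs with h
      · subst h; exact Submodule.mem_span_singleton_self _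
      · exact zero_mem _
    · intro x hx
      rw [Submodule.mem_pi] at hx
      have hx' : ∀ j, ∃ a : R, a • m j = x j := fun j =>
        Submodule.mem_span_singleton.mp (hx j trivial)
      choose a ha using hx'
      have hxsum : x = ∑ j, a j • Matrix.diagonal m j := by
        funext k
        rw [Finset.sum_apply]
        rw [Finset.sum_eq_single k]
        · rw [Pi.smul_apply, Matrix.diagonal_apply_eq, smul_eq_mul, ← smul_eq_mul, ha]
        · intro j _ hjk
          rw [Pi.smul_apply, Matrix.diagonal_apply_ne _ hjk, smul_zero]
        · intro h; exact absurd (Finset.mem_univ k) h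
      rw [hxsum]
      exact Submodule.sum_mem _ fun j _ =>
        Submodule.smul_mem _ _ (Submodule.subset_span ⟨j, rfl⟩)
  -- Step 2 : the quotient is isomorphic to the product of the quotients R/Rmᵢ.
  let f : (Fin r → R) →ₗ[R] (∀ i, R ⧸ P i) :=
    LinearMap.pi fun i => (P i).mkQ ∘ₗ LinearMap.proj i
  have hker : LinearMap.ker f = Submodule.pi Set.univ P := by
    ext x
    simp [f, LinearMap.mem_ker, funext_iff, Submodule.Quotient.mk_eq_zero, Submodule.mem_pi]
  have hsurj : Function.Surjective f := by
    intro y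
    choose x hx using fun i => Submodule.Quotient.mk_surjective (P i) (y i)
    exact ⟨x, funext fun i => hx i⟩
  let e : ((Fin r → R) ⧸ N) ≃ₗ[R] ∀ i, R ⧸ P i :=
    (Submodule.quotEquivOfEq N (LinearMap.ker f) (by rw [hNpi, hker])).trans
      (f.quotKerEquivOfSurjective hsurj)
  -- Step 3 : compute the A-rank of the quotient.
  letI instPi : ∀ i, Module A (R ⧸ P i) := fun i => Module.compHom _ φ
  have hsmulPi : ∀ (a : A) (x : ∀ i, R ⧸ P i), a • x = φ a • x := fun a x => rfl
  have hrank' : @Module.rank A ((Fin r → R) ⧸ N) _ _ (Module.compHom _ φ)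
      = ((∑ i, deg (m i) : ℕ) : Cardinal) := by
    rw [compHom_rank_eq_aux φ hsmulPi e, rank_pi]
    have hstep : ∀ i : Fin r, Module.rank A (R ⧸ P i) = ((deg (m i) : ℕ) : Cardinal) :=
      fun i => hdim (m i) (hm i)
    simp_rw [hstep]
    exact cardinal_sum_natCast_aux fun i => deg (m i)
  have hrank : @Module.rank A ((Fin r → R) ⧸ N) _ _ (Module.compHom _ φ)
      = ∑ i, deg (m i) := by rw [hrank']
  refine ⟨hrank, ?_⟩
  -- Step 4 : the cyclic map R/Rc → Q.
  set q : (Fin r → R) ⧸ N := Submodule.Quotient.mk p with hq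
  let ψ : R →ₗ[R] ((Fin r → R) ⧸ N) :=
    { toFun := fun x => x • q
      map_add' := fun x y => add_smul x y q
      map_smul' := fun x y => mul_smul x y q }
  have hkerψ : LinearMap.ker ψ = Ideal.span {c} := by
    ext x
    have hx := Set.ext_iff.mp hann x
    simpa [ψ, LinearMap.mem_ker] using hx
  let g : (R ⧸ Ideal.span {c}) →ₗ[R] ((Fin r → R) ⧸ N) :=
    Submodule.liftQ (Ideal.span {c}) ψ (le_of_eq hkerψ.symm)
  have hginj : Function.Injective g :=
    LinearMap.ker_eq_bot.mp (Submodule.ker_liftQ_eq_bot _ _ _ (le_of_eq hkerψ))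
  -- Step 5 : g is surjective by dimension count over A.
  letI instQ : Module A ((Fin r → R) ⧸ N) := Module.compHom _ φ
  letI instC : Module A (R ⧸ Ideal.span {c}) := Module.compHom _ φ
  let g' : (R ⧸ Ideal.span {c}) →ₗ[A] ((Fin r → R) ⧸ N) :=
    { toFun := g
      map_add' := g.map_add
      map_smul' := fun a x => g.map_smul (φ a) x }
  have hrankC : Module.rank A (R ⧸ Ideal.span {c})
      = ((∑ i, deg (m i) : ℕ) : Cardinal) := by
    rw [hdim c hc, hdegc]
  have hfinQ : FiniteDimensional A ((Fin r → R) ⧸ N) :=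
    Module.finite_of_rank_eq_nat hrank'
  have hfr : Module.finrank A (LinearMap.range g')
      = Module.finrank A ((Fin r → R) ⧸ N) := by
    rw [LinearMap.finrank_range_of_inj (f := g') hginj,
      Module.finrank_eq_of_rank_eq hrankC, Module.finrank_eq_of_rank_eq hrank']
  have htop : LinearMap.range g' = ⊤ := Submodule.eq_top_of_finrank_eq hfr
  have hgsurj : Function.Surjective g := by
    intro y
    have hy : y ∈ LinearMap.range g' := htop ▸ Submodule.mem_top
    exact hy
  exact ⟨(LinearEquiv.ofBijective g ⟨hginj, hgsurj⟩).symm⟩
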